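/- Let r ≥ 1 and let λ, μ ∈ ℝ^r be strictly decreasing tuples. If μ = w(λ) for some signed permutation w (i.e., λ and μ are conjugate under the Weyl group W(C_r)), then λ ∩ μ = w'(λ) for some signed permutation w' (i.e., λ and λ ∩ μ are conjugate under W(C_r)). -/

import Mathlib

/-- `y` is obtained from `x` by a signed permutation, i.e. `x` and `y` are
conjugate under the Weyl group `W(C_r)` acting on `ℝ^r` by signed permutations. -/
def IsSignedPermOf {r : ℕ} (x y : Fin r → ℝ) : Prop :=
  ∃ (σ : Equiv.Perm (Fin r)) (ε : Fin r → ℝ),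
    (∀ i, ε i = 1 ∨ ε i = -1) ∧ ∀ i, y i = ε i * x (σ i)

namespace Stmt3Aux

open Finset

variable {r : ℕ}

/-- number of indices with `t < x i` -/
noncomputable def cGT (x : Fin r → ℝ) (t : ℝ) : ℕ := (univ.filter fun i => t < x i).card

/-- number of indices with `t ≤ x i` -/
noncomputable def cGE (x : Fin r → ℝ) (t : ℝ) : ℕ := (univ.filter fun i => t ≤ x i).card

/-- number of indices with `t < |x i|` -/
noncomputable def cAbs (x : Fin r → ℝ) (t : ℝ) : ℕ := (univ.filter fun i => t < |x i|).card

lemma card_filter_comp (p : Fin r → Prop) [DecidablePred p] (σ : Equiv.Perm (Fin r)) :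
    (univ.filter fun i => p (σ i)).card = (univ.filter p).card :=
  Finset.card_equiv σ (by simp)

lemma cGT_comp (x : Fin r → ℝ) (σ : Equiv.Perm (Fin r)) (t : ℝ) :
    cGT (fun i => x (σ i)) t = cGT x t :=
  card_filter_comp (fun i => t < x i) σ

lemma cAbs_comp (x : Fin r → ℝ) (σ : Equiv.Perm (Fin r)) (t : ℝ) :
    cAbs (fun i => x (σ i)) t = cAbs x t :=
  card_filter_comp (fun i => t < |x i|) σ

/-- intersection of two downward closed sets of indices has cardinality the min. -/
lemma card_filter_and_min (p q : Fin r → Prop) [DecidablePred p] [DecidablePred q]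
    (hp : ∀ i j : Fin r, i ≤ j → p j → p i) (hq : ∀ i j : Fin r, i ≤ j → q j → q i) :
    (univ.filter fun i => p i ∧ q i).card
      = min (univ.filter p).card (univ.filter q).card := by
  have hcomp : (univ.filter p) ⊆ (univ.filter q) ∨ (univ.filter q) ⊆ (univ.filter p) := by
    by_contra hc
    push_neg at hc
    obtain ⟨a, ha, ha'⟩ := Finset.not_subset.mp hc.1
    obtain ⟨b, hb, hb'⟩ := Finset.not_subset.mp hc.2
    simp only [Finset.mem_filter, Finset.mem_univ, true_and] at ha ha' hb hb'
    rcases le_total a b with hab | hba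
    · exact ha' (hq a b hab hb)
    · exact hb' (hp b a hba ha)
  rw [Finset.filter_and]
  rcases hcomp with h | h
  · rw [Finset.inter_eq_left.mpr h, min_eq_left (Finset.card_le_card h)]
  · rw [Finset.inter_eq_right.mpr h, min_eq_right (Finset.card_le_card h)]

lemma cGT_min (lam mu : Fin r → ℝ) (hlam : Antitone lam) (hmu : Antitone mu) (t : ℝ) :
    cGT (fun i => min (lam i) (mu i)) t = min (cGT lam t) (cGT mu t) := by
  unfold cGT
  have : (univ.filter fun i => t < min (lam i) (mu i))
      = univ.filter fun i => t < lam i ∧ t < mu i := by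
    apply Finset.filter_congr
    intro i _
    exact lt_min_iff
  rw [this]
  exact card_filter_and_min _ _
    (fun i j hij hj => lt_of_lt_of_le hj (hlam hij))
    (fun i j hij hj => lt_of_lt_of_le hj (hmu hij))

lemma cGE_min (lam mu : Fin r → ℝ) (hlam : Antitone lam) (hmu : Antitone mu) (t : ℝ) :
    cGE (fun i => min (lam i) (mu i)) t = min (cGE lam t) (cGE mu t) := by
  unfold cGE
  have : (univ.filter fun i => t ≤ min (lam i) (mu i))
      = univ.filter fun i => t ≤ lam i ∧ t ≤ mu i := by
    apply Finset.filter_congr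
    intro i _
    exact le_min_iff
  rw [this]
  exact card_filter_and_min _ _
    (fun i j hij hj => le_trans hj (hlam hij))
    (fun i j hij hj => le_trans hj (hmu hij))

lemma cAbs_eq (x : Fin r → ℝ) (t : ℝ) (ht : 0 ≤ t) :
    cAbs x t = cGT x t + (r - cGE x (-t)) := by
  unfold cAbs cGT cGE
  have hsplit : (univ.filter fun i : Fin r => t < |x i|)
      = (univ.filter fun i => t < x i) ∪ (univ.filter fun i => ¬ (-t ≤ x i)) := by
    rw [← Finset.filter_or]
    apply Finset.filter_congr
    intro i _
    rw [lt_abs, not_le, lt_neg]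
  have hdisj : Disjoint (univ.filter fun i : Fin r => t < x i)
      (univ.filter fun i : Fin r => ¬ (-t ≤ x i)) := by
    rw [Finset.disjoint_left]
    intro i hi hi'
    simp only [Finset.mem_filter, Finset.mem_univ, true_and, not_le] at hi hi'
    linarith
  rw [hsplit, Finset.card_union_of_disjoint hdisj]
  congr 1
  rw [Finset.filter_not, Finset.card_sdiff_of_subset (Finset.filter_subset _ _)]
  simp

lemma cGT_le_cGE (x : Fin r → ℝ) (t : ℝ) (ht : 0 ≤ t) : cGT x t ≤ cGE x (-t) := by
  apply Finset.card_le_card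
  intro i hi
  simp only [Finset.mem_filter, Finset.mem_univ, true_and] at hi ⊢
  linarith

lemma cGE_le (x : Fin r → ℝ) (t : ℝ) : cGE x t ≤ r := by
  have := Finset.card_filter_le (univ : Finset (Fin r)) (fun i => t ≤ x i)
  simpa [cGE] using this

/-- two monotone tuples with the same counting functions agree -/
lemma mono_le_of_count (f g : Fin r → ℝ) (hf : Monotone f) (hg : Monotone g)
    (h : ∀ t, cGT f t = cGT g t) : ∀ i, f i ≤ g i := by
  intro i
  by_contra hi
  push_neg at hi  -- g i < f i
  have h1 : Finset.Ici i ⊆ univ.filter fun j => g i < f j := by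
    intro j hj
    rw [Finset.mem_Ici] at hj
    simp only [Finset.mem_filter, Finset.mem_univ, true_and]
    exact lt_of_lt_of_le hi (hf hj)
  have h2 : (univ.filter fun j => g i < g j) ⊆ Finset.Ioi i := by
    intro j hj
    simp only [Finset.mem_filter, Finset.mem_univ, true_and] at hj
    rw [Finset.mem_Ioi]
    by_contra hji
    push_neg at hji
    exact absurd (hg hji) (not_le.mpr hj)
  have c1 := Finset.card_le_card h1
  have c2 := Finset.card_le_card h2
  have hc := h (g i)
  unfold cGT at hc
  rw [hc] at c1
  rw [Fin.card_Ici] at c1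
  rw [Fin.card_Ioi] at c2
  have := i.isLt
  omega

lemma mono_eq_of_count (f g : Fin r → ℝ) (hf : Monotone f) (hg : Monotone g)
    (h : ∀ t, cGT f t = cGT g t) : f = g := by
  funext i
  exact le_antisymm (mono_le_of_count f g hf hg h i)
    (mono_le_of_count g f hg hf (fun t => (h t).symm) i)

end Stmt3Aux

open Stmt3Aux Finset in
/-- If `λ, μ ∈ ℝ^r` are strictly decreasing and conjugate under the
Weyl group `W(C_r)` of signed permutations, then `λ` and the pointwise minimum
`λ ∩ μ` are conjugate under `W(C_r)`. -/
theorem stmt3 (r : ℕ) (hr : 1 ≤ r) (lam mu : Fin r → ℝ)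
    (hlam : StrictAnti lam) (hmu : StrictAnti mu)
    (h : IsSignedPermOf lam mu) :
    IsSignedPermOf lam (fun i => min (lam i) (mu i)) := by
  classical
  obtain ⟨σ, ε, hε, hμ⟩ := h
  set ν : Fin r → ℝ := fun i => min (lam i) (mu i) with hνdef
  -- |mu| and |lam| have the same counting function
  have habs_mu : ∀ t, cAbs mu t = cAbs lam t := by
    intro t
    have heq : ∀ i, |mu i| = |lam (σ i)| := by
      intro i
      rw [hμ i, abs_mul]
      rcases hε i with h' | h' <;> simp [h']
    have : cAbs mu t = cAbs (fun i => lam (σ i)) t := by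
      unfold cAbs
      congr 1
      apply Finset.filter_congr
      intro i _
      rw [heq i]
    rw [this, cAbs_comp]
  -- |ν| and |lam| have the same counting function
  have hkey : ∀ t, cAbs ν t = cAbs lam t := by
    intro t
    rcases lt_or_ge t 0 with ht | ht
    · unfold cAbs
      rw [Finset.filter_true_of_mem, Finset.filter_true_of_mem]
      · intro i _; exact lt_of_lt_of_le ht (abs_nonneg _)
      · intro i _; exact lt_of_lt_of_le ht (abs_nonneg _)
    · have e1 := cAbs_eq lam t ht
      have e2 := cAbs_eq mu t ht
      have e3 := cAbs_eq ν t ht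
      have hf : cGT ν t = min (cGT lam t) (cGT mu t) :=
        cGT_min lam mu hlam.antitone hmu.antitone t
      have hg : cGE ν (-t) = min (cGE lam (-t)) (cGE mu (-t)) :=
        cGE_min lam mu hlam.antitone hmu.antitone (-t)
      have hb1 : cGE lam (-t) ≤ r := cGE_le lam (-t)
      have hb2 : cGE mu (-t) ≤ r := cGE_le mu (-t)
      have hb3 : cGT lam t ≤ cGE lam (-t) := cGT_le_cGE lam t ht
      have hb4 : cGT mu t ≤ cGE mu (-t) := cGT_le_cGE mu t ht
      have hmm := habs_mu t
      rw [e1, e2] at hmm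
      rw [e3, e1, hf, hg]
      rcases min_cases (cGT lam t) (cGT mu t) with ⟨hmf, _⟩ | ⟨hmf, _⟩ <;>
        rcases min_cases (cGE lam (-t)) (cGE mu (-t)) with ⟨hmg, _⟩ | ⟨hmg, _⟩ <;>
          omega
  -- sort the absolute values
  set F : Fin r → ℝ := fun i => |ν i| with hF
  set G : Fin r → ℝ := fun i => |lam i| with hG
  have hFG : F ∘ Tuple.sort F = G ∘ Tuple.sort G := by
    apply mono_eq_of_count _ _ (Tuple.monotone_sort F) (Tuple.monotone_sort G)
    intro t
    have h1 : cGT (F ∘ Tuple.sort F) t = cGT F t := cGT_comp F (Tuple.sort F) t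
    have h2 : cGT (G ∘ Tuple.sort G) t = cGT G t := cGT_comp G (Tuple.sort G) t
    rw [h1, h2]
    exact hkey t
  set σ' : Equiv.Perm (Fin r) := (Tuple.sort F).symm.trans (Tuple.sort G) with hσ'
  have habs : ∀ i, |ν i| = |lam (σ' i)| := by
    intro i
    have := congrFun hFG ((Tuple.sort F).symm i)
    simpa [hσ', Function.comp] using this
  refine ⟨σ', fun i => if ν i = lam (σ' i) then 1 else -1, fun i => ?_, fun i => ?_⟩
  · by_cases hc : ν i = lam (σ' i) <;> simp [hc]
  · show ν i = (if ν i = lam (σ' i) then (1:ℝ) else -1) * lam (σ' i)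
    by_cases hc' : ν i = lam (σ' i)
    · simp [hc']
    · rw [if_neg hc']
      rcases abs_eq_abs.mp (habs i) with hc | hc
      · exact absurd hc hc'
      · rw [hc]; ring
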